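/- arXiv:2406.01548 — 2 statements merged into one kernel-verified Lean document; each statement's English description precedes it below -/
import Mathlib

section
/- Let f : ℝ^n × ℝ^m → ℝ^n satisfy ‖f(ξ,v) − f(ξ',v')‖ ≤ L_fξ‖ξ−ξ'‖ + L_fv‖v−v'‖ and g : ℝ^n × ℝ^m → ℝ satisfy |g(ξ,v) − g(ξ',v')| ≤ L_gξ‖ξ−ξ'‖ + L_gv‖v−v'‖. Define q⁽⁰⁾ constant and q⁽ᵏ⁾(ξ,v) = g(ξ,v) + γ·sup_{v'∈A(f(ξ,v))} q⁽ᵏ⁻¹⁾(f(ξ,v),v') with admissible action sets A(·) compact nonempty and satisfying: for all ξ,ξ' and v ∈ A(ξ) there exists v' ∈ A(ξ') with ‖v−v'‖ ≤ L_A‖ξ−ξ'‖. Then for all k ≥ 1, |q⁽ᵏ⁾(ξ,v) − q⁽ᵏ⁾(ξ',v')| ≤ L_ξ⁽ᵏ⁾‖ξ−ξ'‖ + L_v⁽ᵏ⁾‖v−v'‖, where L_ξ⁽¹⁾ = L_gξ, L_v⁽¹⁾ = L_gv, and L_ξ⁽ᵏ⁾ = γ L_ξ⁽ᵏ⁻¹⁾L_fξ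 + γ L_v⁽ᵏ⁻¹⁾L_A L_fξ + L_gξ, L_v⁽ᵏ⁾ = γ L_ξ⁽ᵏ⁻¹⁾L_fv + γ L_v⁽ᵏ⁻¹⁾L_A L_fv + L_gv. -/
/-- Lipschitz continuity of the iterated Q-functions, with
iteratively defined Lipschitz constants. -/
theorem q_iteration_lipschitz
    (n m : ℕ)
    (f : (Fin n → ℝ) → (Fin m → ℝ) → (Fin n → ℝ))
    (g : (Fin n → ℝ) → (Fin m → ℝ) → ℝ)
    (Lfξ Lfv Lgξ Lgv LA : ℝ)
    (hLfξ : 0 ≤ Lfξ) (hLfv : 0 ≤ Lfv) (hLgξ : 0 ≤ Lgξ) (hLgv : 0 ≤ Lgv) (hLA : 0 ≤ LA)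
    (γ : ℝ) (hγ : γ ∈ Set.Ioo (0:ℝ) 1)
    (hf : ∀ ξ ξ' v v', ‖f ξ v - f ξ' v'‖ ≤ Lfξ * ‖ξ - ξ'‖ + Lfv * ‖v - v'‖)
    (hg : ∀ ξ ξ' v v', |g ξ v - g ξ' v'| ≤ Lgξ * ‖ξ - ξ'‖ + Lgv * ‖v - v'‖)
    (A : (Fin n → ℝ) → Set (Fin m → ℝ))
    (hAne : ∀ ξ, (A ξ).Nonempty) (hAcpt : ∀ ξ, IsCompact (A ξ))
    (hAlip : ∀ ξ ξ', ∀ v ∈ A ξ, ∃ v' ∈ A ξ', ‖v - v'‖ ≤ LA * ‖ξ - ξ'‖)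
    (q : ℕ → (Fin n → ℝ) → (Fin m → ℝ) → ℝ)
    (hq0 : ∃ c, ∀ ξ v, q 0 ξ v = c)
    (hqrec : ∀ k ξ v, q (k + 1) ξ v
        = g ξ v + γ * sSup ((fun v' => q k (f ξ v) v') '' A (f ξ v)))
    (Lξ Lv : ℕ → ℝ)
    (hL1 : Lξ 1 = Lgξ ∧ Lv 1 = Lgv)
    (hLrecξ : ∀ k ≥ 1, Lξ (k + 1) = γ * Lξ k * Lfξ + γ * Lv k * LA * Lfξ + Lgξ)
    (hLrecv : ∀ k ≥ 1, Lv (k + 1) = γ * Lξ k * Lfv + γ * Lv k * LA * Lfv + Lgv) :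
    ∀ k ≥ 1, ∀ ξ ξ' v v',
      |q k ξ v - q k ξ' v'| ≤ Lξ k * ‖ξ - ξ'‖ + Lv k * ‖v - v'‖ := by
  obtain ⟨c, hc⟩ := hq0
  have hγ0 : 0 ≤ γ := hγ.1.le
  -- nonnegativity of the Lipschitz constants
  have hpos : ∀ k, 1 ≤ k → 0 ≤ Lξ k ∧ 0 ≤ Lv k := by
    intro k hk
    induction k with
    | zero => omega
    | succ k ih =>
      rcases Nat.lt_or_ge k 1 with h | h
      · interval_cases k
        exact ⟨hL1.1 ▸ hLgξ, hL1.2 ▸ hLgv⟩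
      · obtain ⟨h1, h2⟩ := ih h
        rw [hLrecξ k h, hLrecv k h]
        constructor
        · have := mul_nonneg (mul_nonneg hγ0 h1) hLfξ
          have := mul_nonneg (mul_nonneg (mul_nonneg hγ0 h2) hLA) hLfξ
          linarith
        · have := mul_nonneg (mul_nonneg hγ0 h1) hLfv
          have := mul_nonneg (mul_nonneg (mul_nonneg hγ0 h2) hLA) hLfv
          linarith
  intro k hk
  induction k with
  | zero => omega
  | succ k ih =>
    rcases Nat.lt_or_ge k 1 with h | h
    · -- base case k = 0, proving for q 1
      interval_cases k
      intro ξ ξ' v v'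
      have himg : ∀ x : Fin n → ℝ, (fun v' => q 0 x v') '' A x = {c} := by
        intro x
        ext y
        constructor
        · rintro ⟨a, _, rfl⟩
          simp [hc]
        · intro hy
          obtain ⟨a, ha⟩ := hAne x
          exact ⟨a, ha, by simpa [hc] using hy.symm⟩
      rw [hqrec, hqrec, himg, himg, csSup_singleton, hL1.1, hL1.2]
      have := hg ξ ξ' v v'
      have heq : g ξ v + γ * c - (g ξ' v' + γ * c) = g ξ v - g ξ' v' := by ring
      rw [heq]
      exact this
    · -- inductive step, k ≥ 1
      have ihk := ih h
      obtain ⟨hLξ0, hLv0⟩ := hpos k h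
      intro ξ ξ' v v'
      -- the sup function h x = sSup (q k x '' A x)
      have hbdd : ∀ x : Fin n → ℝ, BddAbove ((fun v' => q k x v') '' A x) := by
        intro x
        have hlip : LipschitzWith (Real.toNNReal (Lv k)) (fun v' => q k x v') := by
          apply LipschitzWith.of_dist_le_mul
          intro a b
          have h1 := ihk x x a b
          simp only [sub_self, norm_zero, mul_zero, zero_add] at h1
          rw [Real.coe_toNNReal _ hLv0, dist_eq_norm, dist_eq_norm]
          simpa [Real.norm_eq_abs] using h1
        exact ((hAcpt x).image hlip.continuous).bddAbove
      have hsup : ∀ x x' : Fin n → ℝ,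
          sSup ((fun v' => q k x v') '' A x)
            ≤ sSup ((fun v' => q k x' v') '' A x') + (Lξ k + Lv k * LA) * ‖x - x'‖ := by
        intro x x'
        apply csSup_le ((hAne x).image _)
        rintro y ⟨a, ha, rfl⟩
        obtain ⟨b, hb, hab⟩ := hAlip x x' a ha
        have h1 := ihk x x' a b
        have h2 : q k x' b ≤ sSup ((fun v' => q k x' v') '' A x') :=
          le_csSup (hbdd x') ⟨b, hb, rfl⟩
        have h3 : q k x a - q k x' b ≤ Lξ k * ‖x - x'‖ + Lv k * ‖a - b‖ :=
          (abs_le.mp h1).2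
        have h4 : Lv k * ‖a - b‖ ≤ Lv k * (LA * ‖x - x'‖) :=
          mul_le_mul_of_nonneg_left hab hLv0
        nlinarith
      set x := f ξ v with hx
      set x' := f ξ' v' with hx'
      have habs : |sSup ((fun v' => q k x v') '' A x)
          - sSup ((fun v' => q k x' v') '' A x')| ≤ (Lξ k + Lv k * LA) * ‖x - x'‖ := by
        rw [abs_sub_le_iff]
        refine ⟨by linarith [hsup x x'], ?_⟩
        have := hsup x' x
        rw [norm_sub_rev] at this
        linarith
      have hfb := hf ξ ξ' v v'
      have hgb := hg ξ ξ' v v'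
      rw [hqrec, hqrec, hLrecξ k h, hLrecv k h]
      have hcoef : 0 ≤ Lξ k + Lv k * LA := by positivity
      have hnormξ : (0:ℝ) ≤ ‖ξ - ξ'‖ := norm_nonneg _
      have hnormv : (0:ℝ) ≤ ‖v - v'‖ := norm_nonneg _
      have key : |g ξ v + γ * sSup ((fun v' => q k x v') '' A x)
          - (g ξ' v' + γ * sSup ((fun v' => q k x' v') '' A x'))|
          ≤ |g ξ v - g ξ' v'| + γ * |sSup ((fun v' => q k x v') '' A x)
            - sSup ((fun v' => q k x' v') '' A x')| := by
        have : g ξ v + γ * sSup ((fun v' => q k x v') '' A x)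
            - (g ξ' v' + γ * sSup ((fun v' => q k x' v') '' A x'))
            = (g ξ v - g ξ' v') + γ * (sSup ((fun v' => q k x v') '' A x)
              - sSup ((fun v' => q k x' v') '' A x')) := by ring
        rw [this]
        calc _ ≤ |g ξ v - g ξ' v'| + |γ * (sSup ((fun v' => q k x v') '' A x)
              - sSup ((fun v' => q k x' v') '' A x'))| := abs_add_le _ _
          _ = _ := by rw [abs_mul, abs_of_nonneg hγ0]
      have hchain : γ * |sSup ((fun v' => q k x v') '' A x)
            - sSup ((fun v' => q k x' v') '' A x')|
          ≤ γ * ((Lξ k + Lv k * LA) * (Lfξ * ‖ξ - ξ'‖ + Lfv * ‖v - v'‖)) := by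
        apply mul_le_mul_of_nonneg_left _ hγ0
        calc _ ≤ (Lξ k + Lv k * LA) * ‖x - x'‖ := habs
          _ ≤ (Lξ k + Lv k * LA) * (Lfξ * ‖ξ - ξ'‖ + Lfv * ‖v - v'‖) :=
            mul_le_mul_of_nonneg_left hfb hcoef
      nlinarith [key, hchain, hgb]
end

section
/- If γ(L_fξ + L_A L_fv) < 1 and all constants are nonnegative, then the sequences L_ξ⁽ᵏ⁾ and L_v⁽ᵏ⁾ defined by the recursion L_ξ⁽ᵏ⁾ = γ L_fξ (L_ξ⁽ᵏ⁻¹⁾ + L_A L_v⁽ᵏ⁻¹⁾) + L_gξ, L_v⁽ᵏ⁾ = γ L_fv (L_ξ⁽ᵏ⁻¹⁾ + L_A L_v⁽ᵏ⁻¹⁾) + L_gv, with L_ξ⁽¹⁾ = L_gξ, L_v⁽¹⁾ = L_gv, are uniformly bounded: there exist L_ξ^max, L_v^max with L_ξ⁽ᵏ⁾ ≤ L_ξ^max and L_v⁽ᵏ⁾ ≤ L_v^max for all k ≥ 1. -/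
/-- uniform boundedness of the iterated Lipschitz constants under
the contraction condition γ(L_fξ + L_A L_fv) < 1. -/
theorem lipschitz_recursion_bounded
    (γ Lfξ Lfv LA Lgξ Lgv : ℝ)
    (hγ : 0 ≤ γ) (hLfξ : 0 ≤ Lfξ) (hLfv : 0 ≤ Lfv) (hLA : 0 ≤ LA)
    (hLgξ : 0 ≤ Lgξ) (hLgv : 0 ≤ Lgv)
    (hcontr : γ * (Lfξ + LA * Lfv) < 1)
    (Lξ Lv : ℕ → ℝ)
    (hL1 : Lξ 1 = Lgξ ∧ Lv 1 = Lgv)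
    (hrecξ : ∀ k ≥ 1, Lξ (k + 1) = γ * Lfξ * (Lξ k + LA * Lv k) + Lgξ)
    (hrecv : ∀ k ≥ 1, Lv (k + 1) = γ * Lfv * (Lξ k + LA * Lv k) + Lgv) :
    ∃ Lξmax Lvmax : ℝ, ∀ k ≥ 1, Lξ k ≤ Lξmax ∧ Lv k ≤ Lvmax := by
  set c := γ * (Lfξ + LA * Lfv) with hc
  have hc0 : 0 ≤ c := mul_nonneg hγ (by positivity)
  set d := Lgξ + LA * Lgv with hd
  have hd0 : 0 ≤ d := by positivity
  have h1c : 0 < 1 - c := by linarith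
  set M := d / (1 - c) with hM
  have hM0 : 0 ≤ M := div_nonneg hd0 h1c.le
  -- key: S k := Lξ k + LA * Lv k ≤ M for all k ≥ 1
  have hS : ∀ k ≥ 1, Lξ k + LA * Lv k ≤ M := by
    intro k hk
    induction k with
    | zero => omega
    | succ n ih =>
      rcases Nat.eq_or_lt_of_le hk with h | h
      · -- n + 1 = 1
        have hn : n = 0 := by omega
        subst hn
        rw [hL1.1, hL1.2]
        rw [hM, le_div_iff₀ h1c]
        nlinarith
      · have hn : n ≥ 1 := by omega
        have ihn := ih hn
        rw [hrecξ n hn, hrecv n hn]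
        have : γ * Lfξ * (Lξ n + LA * Lv n) + Lgξ +
            LA * (γ * Lfv * (Lξ n + LA * Lv n) + Lgv)
            = c * (Lξ n + LA * Lv n) + d := by ring
        rw [this]
        have hSn0 : c * (Lξ n + LA * Lv n) ≤ c * M :=
          mul_le_mul_of_nonneg_left ihn hc0
        have hMd : c * M + d ≤ M := by
          rw [hM]
          field_simp
          nlinarith
        linarith
  refine ⟨γ * Lfξ * M + Lgξ, γ * Lfv * M + Lgv, fun k hk => ?_⟩
  rcases Nat.eq_or_lt_of_le hk with h | h
  · constructor
    · rw [← h, hL1.1]; nlinarith [mul_nonneg (mul_nonneg hγ hLfξ) hM0]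
    · rw [← h, hL1.2]; nlinarith [mul_nonneg (mul_nonneg hγ hLfv) hM0]
  · obtain ⟨n, rfl⟩ : ∃ n, k = n + 1 := ⟨k - 1, by omega⟩
    have hn : n ≥ 1 := by omega
    have hSn := hS n hn
    constructor
    · rw [hrecξ n hn]
      have := mul_le_mul_of_nonneg_left hSn (mul_nonneg hγ hLfξ)
      linarith
    · rw [hrecv n hn]
      have := mul_le_mul_of_nonneg_left hSn (mul_nonneg hγ hLfv)
      linarith
end
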